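/- For every positive integer N, ζ_{<N}(2) := Σ_{0<n<N} 1/n^2 equals Σ_{0<n_1≤n_2<N} 1/((N−n_1)·n_2). -/

import Mathlib

open Finset

lemma refl_sum (N : ℕ) :
    ∑ j ∈ Ioo 0 N, (1:ℚ)/((N:ℚ) - (j:ℚ)) = ∑ j ∈ Ioo 0 N, (1:ℚ)/(j:ℚ) := by
  apply Finset.sum_nbij' (fun j => N - j) (fun j => N - j)
  · intro a ha; simp only [mem_Ioo] at *; omega
  · intro a ha; simp only [mem_Ioo] at *; omega
  · intro a ha; simp only [mem_Ioo] at ha; omega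
  · intro a ha; simp only [mem_Ioo] at ha; omega
  · intro a ha; simp only [mem_Ioo] at ha
    rw [Nat.cast_sub (by omega)]

lemma key (N : ℕ) :
    ∑ n ∈ Ioo 0 N, (1:ℚ)/(n:ℚ)^2 =
    ∑ n1 ∈ Ioo 0 N, ∑ n2 ∈ Icc n1 (N-1), (1:ℚ)/(((N:ℚ)-(n1:ℚ))*(n2:ℚ)) := by
  induction N with
  | zero => simp
  | succ N ih =>
    rcases Nat.eq_zero_or_pos N with rfl | hN
    · have : Ioo 0 1 = (∅ : Finset ℕ) := rfl
      simp [this]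
    have hN0 : (N:ℚ) ≠ 0 := Nat.cast_ne_zero.mpr (by omega)
    set H : ℚ := ∑ j ∈ Ioo 0 N, (1:ℚ)/(j:ℚ) with hH
    -- LHS split
    have hIoo : Ioo 0 (N+1) = insert N (Ioo 0 N) := by ext x; simp [mem_Ioo]; omega
    have hNnot : N ∉ Ioo 0 N := by simp
    have hLHS : ∑ n ∈ Ioo 0 (N+1), (1:ℚ)/(n:ℚ)^2
        = (∑ n ∈ Ioo 0 N, (1:ℚ)/(n:ℚ)^2) + 1/(N:ℚ)^2 := by
      rw [hIoo, Finset.sum_insert hNnot]; ring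
    -- RHS : simplify N+1-1 = N
    simp only [Nat.add_sub_cancel]
    -- split off n1 = 1
    have h1 : Ioo 0 (N+1) = insert 1 (Ioo 1 (N+1)) := by ext x; simp [mem_Ioo]; omega
    have h1not : (1:ℕ) ∉ Ioo 1 (N+1) := by simp
    rw [hLHS, h1, Finset.sum_insert h1not]
    -- first term
    have hterm1 : ∑ n2 ∈ Icc 1 N, (1:ℚ)/((((N+1:ℕ):ℚ)-((1:ℕ):ℚ))*(n2:ℚ))
        = (H + 1/N) * (1/N) := by
      have : ∀ n2 ∈ Icc 1 N, (1:ℚ)/((((N+1:ℕ):ℚ)-((1:ℕ):ℚ))*(n2:ℚ))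
          = (1/(n2:ℚ)) * (1/(N:ℚ)) := by
        intro n2 _; push_cast; rw [one_div_mul_one_div]; ring_nf
      rw [Finset.sum_congr rfl this, ← Finset.sum_mul]
      congr 1
      have : Icc 1 N = insert N (Ioo 0 N) := by ext x; simp [mem_Ioo]; omega
      rw [this, Finset.sum_insert hNnot]; ring
    -- reindex the rest
    have hreix : ∑ n1 ∈ Ioo 1 (N+1), ∑ n2 ∈ Icc n1 N, (1:ℚ)/((((N+1:ℕ):ℚ)-(n1:ℚ))*(n2:ℚ))
        = ∑ j ∈ Ioo 0 N, ∑ n2 ∈ Icc (j+1) N, (1:ℚ)/(((N:ℚ)-(j:ℚ))*(n2:ℚ)) := by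
      apply Finset.sum_nbij' (fun j => j - 1) (fun j => j + 1)
      · intro a ha; simp only [mem_Ioo] at *; omega
      · intro a ha; simp only [mem_Ioo] at *; omega
      · intro a ha; simp only [mem_Ioo] at ha; omega
      · intro a ha; simp only [mem_Ioo] at ha; omega
      · intro a ha; simp only [mem_Ioo] at ha
        have h1 : a - 1 + 1 = a := by omega
        rw [h1]
        apply Finset.sum_congr rfl
        intro n2 _
        push_cast [Nat.cast_sub (show 1 ≤ a by omega)]
        ring_nf
    rw [hreix]
    -- inner split for each j
    have hsplit : ∀ j ∈ Ioo 0 N,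
        ∑ n2 ∈ Icc (j+1) N, (1:ℚ)/(((N:ℚ)-(j:ℚ))*(n2:ℚ))
        = (∑ n2 ∈ Icc j (N-1), (1:ℚ)/(((N:ℚ)-(j:ℚ))*(n2:ℚ)))
          + (1:ℚ)/(((N:ℚ)-(j:ℚ))*(N:ℚ)) - (1:ℚ)/(((N:ℚ)-(j:ℚ))*(j:ℚ)) := by
      intro j hj; simp only [mem_Ioo] at hj
      have e1 : Icc j N = insert j (Icc (j+1) N) := by ext x; simp [mem_Icc]; omega
      have e2 : Icc j N = insert N (Icc j (N-1)) := by ext x; simp [mem_Icc]; omega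
      have n1 : j ∉ Icc (j+1) N := by simp [mem_Icc]
      have n2 : N ∉ Icc j (N-1) := by simp [mem_Icc]; omega
      have eq1 : ∑ n2 ∈ Icc j N, (1:ℚ)/(((N:ℚ)-(j:ℚ))*(n2:ℚ))
          = (1:ℚ)/(((N:ℚ)-(j:ℚ))*(j:ℚ)) + ∑ n2 ∈ Icc (j+1) N, (1:ℚ)/(((N:ℚ)-(j:ℚ))*(n2:ℚ)) := by
        rw [e1, Finset.sum_insert n1]
      have eq2 : ∑ n2 ∈ Icc j N, (1:ℚ)/(((N:ℚ)-(j:ℚ))*(n2:ℚ))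
          = (1:ℚ)/(((N:ℚ)-(j:ℚ))*(N:ℚ)) + ∑ n2 ∈ Icc j (N-1), (1:ℚ)/(((N:ℚ)-(j:ℚ))*(n2:ℚ)) := by
        rw [e2, Finset.sum_insert n2]
      linarith
    rw [Finset.sum_congr rfl hsplit]
    simp only [Finset.sum_add_distrib, Finset.sum_sub_distrib]
    -- the two scalar sums
    have hS1 : ∑ j ∈ Ioo 0 N, (1:ℚ)/(((N:ℚ)-(j:ℚ))*(N:ℚ)) = H * (1/N) := by
      have : ∀ j ∈ Ioo 0 N, (1:ℚ)/(((N:ℚ)-(j:ℚ))*(N:ℚ))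
          = (1/((N:ℚ)-(j:ℚ))) * (1/(N:ℚ)) := by
        intro j _; rw [one_div_mul_one_div]
      rw [Finset.sum_congr rfl this, ← Finset.sum_mul, refl_sum]
    have hS2 : ∑ j ∈ Ioo 0 N, (1:ℚ)/(((N:ℚ)-(j:ℚ))*(j:ℚ)) = (H + H) * (1/N) := by
      have : ∀ j ∈ Ioo 0 N, (1:ℚ)/(((N:ℚ)-(j:ℚ))*(j:ℚ))
          = (1/((N:ℚ)-(j:ℚ)) + 1/(j:ℚ)) * (1/(N:ℚ)) := by
        intro j hj; simp only [mem_Ioo] at hj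
        have hj0 : (j:ℚ) ≠ 0 := Nat.cast_ne_zero.mpr (by omega)
        have hNj : (N:ℚ) - (j:ℚ) ≠ 0 := by
          have : (j:ℚ) < (N:ℚ) := by exact_mod_cast hj.2
          linarith
        field_simp
        ring
      rw [Finset.sum_congr rfl this, ← Finset.sum_mul, Finset.sum_add_distrib, refl_sum]
    rw [hS1, hS2, ← ih, hterm1]
    field_simp
    ring


/-- `ζ_{<N}(2) = Σ_{0<n₁≤n₂<N} 1/((N−n₁)·n₂)`. -/
theorem stmt_9 (N : ℕ) (hN : 0 < N) :
    ∑ n ∈ Finset.Ioo 0 N, (1 : ℚ) / (n : ℚ) ^ 2 =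
    ∑ n1 ∈ Finset.Ioo 0 N, ∑ n2 ∈ Finset.Icc n1 (N - 1),
      (1 : ℚ) / (((N : ℚ) - (n1 : ℚ)) * (n2 : ℚ)) := by
  exact key N
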